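/- For any finite group G, the width of G (the size of a minimal generating set of the complete transfer system) equals the number of conjugacy classes of meet-irreducible subgroups of G; a minimal generating set is given by choosing one pair (I,G) for each conjugacy class of meet-irreducible proper behavior subgroups I. -/

import Mathlib

/-- Conjugate of a subgroup: `H^g`. -/
def conjSub {G : Type*} [Group G] (g : G) (H : Subgroup G) : Subgroup G :=
  H.map (MulAut.conj g).toMonoidHom

/-- A `G`-transfer system: a set of pairs `(K, H)` of subgroups with `K ≤ H`, containing all
identity pairs and closed under composition, conjugation, and restriction. -/
def IsTransferSystem {G : Type*} [Group G] (T : Set (Subgroup G × Subgroup G)) : Prop :=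
  (∀ p ∈ T, p.1 ≤ p.2) ∧
  (∀ H : Subgroup G, (H, H) ∈ T) ∧
  (∀ L K H : Subgroup G, (L, K) ∈ T → (K, H) ∈ T → (L, H) ∈ T) ∧
  (∀ K H : Subgroup G, (K, H) ∈ T → ∀ g : G, (conjSub g K, conjSub g H) ∈ T) ∧
  (∀ K H : Subgroup G, (K, H) ∈ T → ∀ L : Subgroup G, L ≤ H → (K ⊓ L, L) ∈ T)

/-- Rubin's closure: the smallest transfer system containing `S`. -/
def tsGen {G : Type*} [Group G] (S : Set (Subgroup G × Subgroup G)) :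
    Set (Subgroup G × Subgroup G) :=
  ⋂₀ {T | IsTransferSystem T ∧ S ⊆ T}

/-- `S` is a minimal generating set (of non-identity intervals) for the transfer system `T`. -/
def IsMinGenSet {G : Type*} [Group G] (S T : Set (Subgroup G × Subgroup G)) : Prop :=
  S ⊆ T ∧ (∀ p ∈ S, p.1 ≠ p.2) ∧ tsGen S = T ∧ ∀ s ∈ S, tsGen (S \ {s}) ⊂ T

/-- Total exponent (number of prime factors with multiplicity) of `n`. -/
def bigOmega (n : ℕ) : ℕ := n.primeFactorsList.length

/-- A proper subgroup is meet-irreducible if it is not the intersection of two strictly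
larger subgroups. -/
def MeetIrred {G : Type*} [Group G] (H : Subgroup G) : Prop :=
  H ≠ ⊤ ∧ ¬ ∃ A B : Subgroup G, H < A ∧ H < B ∧ H = A ⊓ B

/-- The complete transfer system: all pairs `(H, K)` with `H ≤ K`. -/
def completeTS (G : Type*) [Group G] : Set (Subgroup G × Subgroup G) :=
  {p | p.1 ≤ p.2}

section Lemmas
variable {G : Type*} [Group G]

lemma mem_conjSub {g x : G} {H : Subgroup G} : x ∈ conjSub g H ↔ g⁻¹ * x * g ∈ H := by
  simp only [conjSub, Subgroup.mem_map, MulEquiv.coe_toMonoidHom, MulAut.conj_apply]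
  constructor
  · rintro ⟨y, hy, rfl⟩
    have : g⁻¹ * (g * y * g⁻¹) * g = y := by group
    rwa [this]
  · intro h
    exact ⟨g⁻¹ * x * g, h, by group⟩

lemma conjSub_conjSub (a b : G) (H : Subgroup G) :
    conjSub a (conjSub b H) = conjSub (a * b) H := by
  ext x
  simp only [mem_conjSub, mul_inv_rev, mul_assoc]

lemma conjSub_one (H : Subgroup G) : conjSub 1 H = H := by
  ext x; simp [mem_conjSub]

lemma conjSub_inv_conjSub (g : G) (H : Subgroup G) : conjSub g⁻¹ (conjSub g H) = H := by
  rw [conjSub_conjSub, inv_mul_cancel, conjSub_one]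

lemma conjSub_top (g : G) : conjSub g (⊤ : Subgroup G) = ⊤ := by
  ext x; simp [mem_conjSub]

lemma conjSub_mono (g : G) {A B : Subgroup G} (h : A ≤ B) : conjSub g A ≤ conjSub g B := by
  intro x hx
  rw [mem_conjSub] at hx ⊢
  exact h hx

lemma conjSub_inj {g : G} {A B : Subgroup G} (h : conjSub g A = conjSub g B) : A = B := by
  have := congrArg (conjSub g⁻¹) h
  rwa [conjSub_inv_conjSub, conjSub_inv_conjSub] at this

lemma conjSub_lt (g : G) {A B : Subgroup G} (h : A < B) : conjSub g A < conjSub g B :=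
  lt_of_le_of_ne (conjSub_mono g h.le) (fun e => h.ne (conjSub_inj e))

lemma conjSub_inf (g : G) (A B : Subgroup G) :
    conjSub g (A ⊓ B) = conjSub g A ⊓ conjSub g B := by
  ext x; simp [mem_conjSub, Subgroup.mem_inf]

lemma meetIrred_conj {K : Subgroup G} (a : G) (h : MeetIrred K) : MeetIrred (conjSub a K) := by
  constructor
  · intro htop
    apply h.1
    have := congrArg (conjSub a⁻¹) htop
    rwa [conjSub_inv_conjSub, conjSub_top] at this
  · rintro ⟨A, B, h1, h2, h3⟩
    apply h.2
    refine ⟨conjSub a⁻¹ A, conjSub a⁻¹ B, ?_, ?_, ?_⟩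
    · have := conjSub_lt a⁻¹ h1; rwa [conjSub_inv_conjSub] at this
    · have := conjSub_lt a⁻¹ h2; rwa [conjSub_inv_conjSub] at this
    · have := congrArg (conjSub a⁻¹) h3
      rwa [conjSub_inv_conjSub, conjSub_inf] at this

/-- The unique minimal strict overgroup of a meet-irreducible subgroup. -/
def istar (I : Subgroup G) : Subgroup G := sInf {J | I < J}

lemma istar_le {I J : Subgroup G} (h : I < J) : istar I ≤ J := sInf_le h

lemma le_istar (I : Subgroup G) : I ≤ istar I := le_sInf fun _ hJ => le_of_lt hJ

lemma lt_istar [Finite G] {I : Subgroup G} (hI : MeetIrred I) : I < istar I := by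
  classical
  set O : Set (Subgroup G) := {J | I < J} with hO
  have hfin : O.Finite := Set.toFinite O
  have hne : O.Nonempty := ⟨⊤, lt_top_iff_ne_top.mpr hI.1⟩
  obtain ⟨A, hA, hAmin'⟩ := hfin.exists_minimal hne
  have hAmin : ∀ a' ∈ O, id a' ≤ id A → id A = id a' := fun a' ha' h => le_antisymm (hAmin' ha' h) h
  have hAle : ∀ B ∈ O, A ≤ B := by
    intro B hB
    rcases eq_or_lt_of_le (le_inf (le_of_lt hA) (le_of_lt hB) : I ≤ A ⊓ B) with heq | hlt
    · exact absurd ⟨A, B, hA, hB, heq⟩ hI.2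
    · have hABO : A ⊓ B ∈ O := hlt
      have := hAmin (A ⊓ B) hABO (inf_le_left)
      exact (le_of_eq this).trans inf_le_right
  exact lt_of_lt_of_le hA (le_sInf hAle)

lemma conj_istar_le [Finite G] {g : G} {I K : Subgroup G} (h : conjSub g I < K) :
    conjSub g (istar I) ≤ K := by
  have h1 : I < conjSub g⁻¹ K := by
    have := conjSub_lt g⁻¹ h
    rwa [conjSub_inv_conjSub] at this
  have h2 : conjSub g (istar I) ≤ conjSub g (conjSub g⁻¹ K) := conjSub_mono g (istar_le h1)
  rwa [conjSub_conjSub, mul_inv_cancel, conjSub_one] at h2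

/-- The maximal transfer system avoiding the conjugacy class of the pair `(I, istar I)`. -/
def MTS (I : Subgroup G) : Set (Subgroup G × Subgroup G) :=
  {p | p.1 ≤ p.2 ∧ ∀ g : G, p.1 = conjSub g I → ¬ conjSub g (istar I) ≤ p.2}

lemma MTS_isTS [Finite G] {I : Subgroup G} (hI : MeetIrred I) : IsTransferSystem (MTS I) := by
  refine ⟨fun p hp => hp.1, ?_, ?_, ?_, ?_⟩
  · intro H
    refine ⟨le_refl H, fun g hg hle => ?_⟩
    have hg' : H = conjSub g I := hg
    have hle' : conjSub g (istar I) ≤ H := hle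
    rw [hg'] at hle'
    exact (conjSub_lt g (lt_istar hI)).not_ge hle'
  · rintro L K H ⟨hLK, h1⟩ ⟨hKH, h2⟩
    refine ⟨hLK.trans hKH, fun g hg hle => ?_⟩
    have hg' : L = conjSub g I := hg
    have hle' : conjSub g (istar I) ≤ H := hle
    have hLK' : L ≤ K := hLK
    rcases eq_or_lt_of_le hLK' with heq | hlt
    · exact h2 g (heq ▸ hg') hle'
    · rw [hg'] at hlt
      exact h1 g hg' (conj_istar_le hlt)
  · rintro K H ⟨hKH, h⟩ a
    refine ⟨conjSub_mono a hKH, fun g hg hle => ?_⟩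
    have hg' : K = conjSub (a⁻¹ * g) I := by
      have := congrArg (conjSub a⁻¹) hg
      rwa [conjSub_inv_conjSub, conjSub_conjSub] at this
    have hle' : conjSub (a⁻¹ * g) (istar I) ≤ H := by
      have := conjSub_mono a⁻¹ hle
      rwa [conjSub_conjSub, conjSub_inv_conjSub] at this
    exact h (a⁻¹ * g) hg' hle'
  · rintro K H ⟨hKH, h⟩ L hLH
    refine ⟨inf_le_right, fun g hg hle => ?_⟩
    have hg' : K ⊓ L = conjSub g I := hg
    have hle' : conjSub g (istar I) ≤ L := hle
    have hIK : conjSub g I ≤ K := hg' ▸ inf_le_left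
    rcases eq_or_lt_of_le hIK with heq | hlt
    · exact h g heq.symm (hle'.trans hLH)
    · have h2 : conjSub g (istar I) ≤ K ⊓ L := le_inf (conj_istar_le hlt) hle'
      rw [hg'] at h2
      exact (conjSub_lt g (lt_istar hI)).not_ge h2

lemma not_mem_MTS {I : Subgroup G} {g : G} {H : Subgroup G}
    (h : conjSub g (istar I) ≤ H) : (conjSub g I, H) ∉ MTS I :=
  fun hm => hm.2 g rfl h

lemma top_not_mem_MTS (I : Subgroup G) : ((I, ⊤) : Subgroup G × Subgroup G) ∉ MTS I := by
  have := not_mem_MTS (I := I) (g := 1) (H := ⊤) le_top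
  rwa [conjSub_one] at this

lemma exists_conj_of_not_mem_MTS {I : Subgroup G} {s : Subgroup G × Subgroup G}
    (h1 : s.1 ≤ s.2) (h : s ∉ MTS I) :
    ∃ g, s.1 = conjSub g I ∧ conjSub g (istar I) ≤ s.2 := by
  unfold MTS at h
  rw [Set.mem_setOf_eq] at h
  push_neg at h
  exact h h1

lemma completeTS_isTS : IsTransferSystem (completeTS G) := by
  refine ⟨fun p hp => hp, fun H => le_refl H, fun L K H h1 h2 => show L ≤ H from le_trans (show L ≤ K from h1) (show K ≤ H from h2),
    fun K H h g => conjSub_mono g h, fun K H _ L _ => show K ⊓ L ≤ L from inf_le_right⟩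

lemma subset_tsGen (S : Set (Subgroup G × Subgroup G)) : S ⊆ tsGen S :=
  fun p hp => Set.mem_sInter.mpr fun _ hT => hT.2 hp

lemma tsGen_le {S T : Set (Subgroup G × Subgroup G)} (hT : IsTransferSystem T) (h : S ⊆ T) :
    tsGen S ⊆ T :=
  Set.sInter_subset_of_mem ⟨hT, h⟩

lemma tsGen_isTS {S : Set (Subgroup G × Subgroup G)} (hS : S ⊆ completeTS G) :
    IsTransferSystem (tsGen S) := by
  refine ⟨?_, ?_, ?_, ?_, ?_⟩
  · intro p hp
    exact (Set.mem_sInter.mp hp) (completeTS G) ⟨completeTS_isTS, hS⟩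
  · intro H
    exact Set.mem_sInter.mpr fun T hT => hT.1.2.1 H
  · intro L K H h1 h2
    exact Set.mem_sInter.mpr fun T hT =>
      hT.1.2.2.1 L K H (Set.mem_sInter.mp h1 T hT) (Set.mem_sInter.mp h2 T hT)
  · intro K H h g
    exact Set.mem_sInter.mpr fun T hT => hT.1.2.2.2.1 K H (Set.mem_sInter.mp h T hT) g
  · intro K H h L hL
    exact Set.mem_sInter.mpr fun T hT => hT.1.2.2.2.2 K H (Set.mem_sInter.mp h T hT) L hL

/-- Crux: a set of pairs hitting every conjugacy class of meet-irreducibles generates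
the complete transfer system. -/
lemma complete_subset_tsGen [Finite G] (W : Set (Subgroup G))
    (hW2 : ∀ H : Subgroup G, MeetIrred H → ∃! I, I ∈ W ∧ ∃ g : G, conjSub g H = I)
    {S : Set (Subgroup G × Subgroup G)} (hSc : S ⊆ completeTS G)
    (hhit : ∀ I ∈ W, ∃ s ∈ S, s ∉ MTS I) :
    completeTS G ⊆ tsGen S := by
  have hT : IsTransferSystem (tsGen S) := tsGen_isTS hSc
  have hST : S ⊆ tsGen S := subset_tsGen S
  have htop : ∀ K : Subgroup G, (K, (⊤ : Subgroup G)) ∈ tsGen S := by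
    have wf : WellFounded ((· > ·) : Subgroup G → Subgroup G → Prop) :=
      Finite.to_wellFoundedGT.wf
    intro K
    induction K using WellFounded.induction wf with
    | _ K IH =>
    by_cases hKtop : K = ⊤
    · subst hKtop; exact hT.2.1 ⊤
    by_cases hMI : MeetIrred K
    · obtain ⟨I, ⟨hIW, a, haK⟩, _⟩ := hW2 K hMI
      obtain ⟨s, hsS, hsM⟩ := hhit I hIW
      obtain ⟨g, hg1, hg2⟩ := exists_conj_of_not_mem_MTS (hSc hsS) hsM
      have hIMI : MeetIrred I := haK ▸ meetIrred_conj a hMI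
      have hsT : (s.1, s.2) ∈ tsGen S := hST hsS
      have hconj := hT.2.2.2.1 s.1 s.2 hsT (a⁻¹ * g⁻¹)
      have hcg : a⁻¹ * g⁻¹ * g = a⁻¹ := by group
      have hKI : K = conjSub a⁻¹ I := by
        rw [← haK, conjSub_conjSub, inv_mul_cancel, conjSub_one]
      have hs1 : conjSub (a⁻¹ * g⁻¹) s.1 = K := by
        rw [hg1, conjSub_conjSub, hcg, ← hKI]
      have hLs2 : conjSub a⁻¹ (istar I) ≤ conjSub (a⁻¹ * g⁻¹) s.2 := by
        have := conjSub_mono (a⁻¹ * g⁻¹) hg2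
        rwa [conjSub_conjSub, hcg] at this
      have hres := hT.2.2.2.2 _ _ hconj (conjSub a⁻¹ (istar I)) hLs2
      have hKL : K < conjSub a⁻¹ (istar I) := by
        rw [hKI]; exact conjSub_lt a⁻¹ (lt_istar hIMI)
      have hinf : conjSub (a⁻¹ * g⁻¹) s.1 ⊓ conjSub a⁻¹ (istar I) = K := by
        rw [hs1]; exact inf_eq_left.mpr hKL.le
      rw [hinf] at hres
      exact hT.2.2.1 K _ ⊤ hres (IH _ hKL)
    · have hprop : ∃ A B : Subgroup G, K < A ∧ K < B ∧ K = A ⊓ B := by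
        unfold MeetIrred at hMI
        push_neg at hMI
        exact hMI hKtop
      obtain ⟨A, B, hA, hB, hAB⟩ := hprop
      have hAT : (A, (⊤ : Subgroup G)) ∈ tsGen S := IH A hA
      have hBT : (B, (⊤ : Subgroup G)) ∈ tsGen S := IH B hB
      have hres : (A ⊓ B, B) ∈ tsGen S := hT.2.2.2.2 A ⊤ hAT B le_top
      rw [← hAB] at hres
      exact hT.2.2.1 K B ⊤ hres hBT
  intro p hp
  have hres : (p.1 ⊓ p.2, p.2) ∈ tsGen S := hT.2.2.2.2 p.1 ⊤ (htop p.1) p.2 le_top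
  have : p.1 ⊓ p.2 = p.1 := inf_eq_left.mpr hp
  rw [this] at hres
  exact (Prod.mk.eta (p := p)) ▸ hres

end Lemmas

/-- The width of a finite group `G` equals the number of conjugacy classes of
meet-irreducible subgroups of `G`: choosing one representative `I` per conjugacy class,
the pairs `(I, G)` form a minimal generating set of the complete transfer system, and every
minimal generating set of the complete transfer system has that cardinality. -/
theorem width_eq_card_meetIrreducible {G : Type*} [Group G] [Finite G]
    (W : Set (Subgroup G))
    (hW1 : ∀ I ∈ W, MeetIrred I)
    (hW2 : ∀ H : Subgroup G, MeetIrred H → ∃! I, I ∈ W ∧ ∃ g : G, conjSub g H = I) :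
    IsMinGenSet ((fun I => (I, (⊤ : Subgroup G))) '' W) (completeTS G) ∧
    ∀ S : Set (Subgroup G × Subgroup G),
      IsMinGenSet S (completeTS G) → S.ncard = W.ncard := by
  classical
  have himgsub : ((fun I => (I, (⊤ : Subgroup G))) '' W) ⊆ completeTS G := by
    rintro p ⟨I, hIW, rfl⟩
    exact (le_top : I ≤ ⊤)
  constructor
  · refine ⟨himgsub, ?_, ?_, ?_⟩
    · rintro p ⟨I, hIW, rfl⟩
      simpa using (hW1 I hIW).1
    · apply Set.Subset.antisymm (tsGen_le completeTS_isTS himgsub)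
      apply complete_subset_tsGen W hW2 himgsub
      intro I hIW
      exact ⟨(I, ⊤), ⟨I, hIW, rfl⟩, top_not_mem_MTS I⟩
    · rintro s ⟨I, hIW, rfl⟩
      have hsub : tsGen (((fun I => (I, (⊤ : Subgroup G))) '' W) \ {(I, ⊤)}) ⊆ completeTS G :=
        tsGen_le completeTS_isTS ((Set.diff_subset).trans himgsub)
      have hMsub : (((fun I => (I, (⊤ : Subgroup G))) '' W) \ {(I, ⊤)}) ⊆ MTS I := by
        rintro p ⟨⟨J, hJW, rfl⟩, hne⟩
        refine ⟨le_top, fun g hg _ => ?_⟩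
        have hg' : J = conjSub g I := hg
        have hJI : J = I := by
          obtain ⟨I₀, hI₀, huniq⟩ := hW2 I (hW1 I hIW)
          have e1 : J = I₀ := huniq J ⟨hJW, g, hg'.symm⟩
          have e2 : I = I₀ := huniq I ⟨hIW, 1, conjSub_one I⟩
          rw [e1, e2]
        exact hne (by simp [hJI])
      have hnotmem : ((I, ⊤) : Subgroup G × Subgroup G) ∉
          tsGen (((fun I => (I, (⊤ : Subgroup G))) '' W) \ {(I, ⊤)}) :=
        fun hmem => top_not_mem_MTS I (tsGen_le (MTS_isTS (hW1 I hIW)) hMsub hmem)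
      rw [Set.ssubset_def]
      refine ⟨hsub, fun hcs => hnotmem (hcs ?_)⟩
      exact (le_top : I ≤ ⊤)
  · intro S hS
    obtain ⟨hSsub, hSne, hSgen, hSmin⟩ := hS
    have hhit : ∀ I ∈ W, ∃ s ∈ S, s ∉ MTS I := by
      intro I hIW
      by_contra hcon
      push_neg at hcon
      have h1 : tsGen S ⊆ MTS I := tsGen_le (MTS_isTS (hW1 I hIW)) hcon
      rw [hSgen] at h1
      exact top_not_mem_MTS I (h1 (show ((I, ⊤) : Subgroup G × Subgroup G) ∈ completeTS G from
        (le_top : I ≤ ⊤)))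
    have hchoice : ∀ I : Subgroup G, ∃ s : Subgroup G × Subgroup G,
        I ∈ W → s ∈ S ∧ s ∉ MTS I := by
      intro I
      by_cases hIW : I ∈ W
      · obtain ⟨s, h1, h2⟩ := hhit I hIW
        exact ⟨s, fun _ => ⟨h1, h2⟩⟩
      · exact ⟨(⊥, ⊥), fun h => absurd h hIW⟩
    choose f hf using hchoice
    have hinj : Set.InjOn f W := by
      intro I hI J hJ heq
      obtain ⟨hfSI, hfI⟩ := hf I hI
      obtain ⟨hfSJ, hfJ⟩ := hf J hJ
      obtain ⟨g, hgI, _⟩ := exists_conj_of_not_mem_MTS (hSsub hfSI) hfI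
      obtain ⟨h, hgJ, _⟩ := exists_conj_of_not_mem_MTS (hSsub hfSJ) hfJ
      rw [heq] at hgI
      have hconj : conjSub (h⁻¹ * g) I = J := by
        have := congrArg (conjSub h⁻¹) (hgI.symm.trans hgJ)
        rwa [conjSub_conjSub, conjSub_inv_conjSub] at this
      obtain ⟨I₀, _, huniq⟩ := hW2 I (hW1 I hI)
      have e1 : I = I₀ := huniq I ⟨hI, 1, conjSub_one I⟩
      have e2 : J = I₀ := huniq J ⟨hJ, h⁻¹ * g, hconj⟩
      rw [e1, e2]
    have himg : f '' W = S := by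
      apply Set.Subset.antisymm
      · rintro s ⟨I, hIW, rfl⟩
        exact (hf I hIW).1
      · intro s hsS
        by_contra hs
        have hdiff : S \ {s} ⊆ completeTS G := Set.diff_subset.trans hSsub
        have hhd : ∀ I ∈ W, ∃ t ∈ S \ {s}, t ∉ MTS I := by
          intro I hIW
          exact ⟨f I, ⟨(hf I hIW).1, fun heq => hs ⟨I, hIW, heq⟩⟩, (hf I hIW).2⟩
        have hgen := complete_subset_tsGen W hW2 hdiff hhd
        have hss := hSmin s hsS
        rw [Set.ssubset_def] at hss
        exact hss.2 hgen
    rw [← himg, Set.ncard_image_of_injOn hinj]
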